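/- In a Win-by-Two tiebreaker starting from a tie with A serving first, under the Catch-Up Rule with p = q and 0 \leq p < 1, the probability that A wins is 2p/(1+2p), the unique solution of P = p(1-p) + p^2 P + (1-p)p(1-P). In particular this probability is at most 2/3 and is increasing in p. -/
import Mathlib


/-- In a Win-by-Two tiebreaker starting from a tie with A serving first, under the
Catch-Up Rule with both players winning on their own serve with probability `p`
(`0 ≤ p < 1`), A's win probability is `2p/(1+2p)`: it satisfies, and is the unique
solution of, `P = p(1-p) + p²P + p(1-p)(1-P)`.  In particular this probability is
at most `2/3`, and it is (strictly) increasing in `p` on `[0,1)`. -/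
theorem CR_tiebreaker (p : ℝ) (hp0 : 0 ≤ p) (hp1 : p < 1) :
    (2 * p / (1 + 2 * p)
        = p * (1 - p) + p ^ 2 * (2 * p / (1 + 2 * p))
          + p * (1 - p) * (1 - 2 * p / (1 + 2 * p))) ∧
      (∀ P : ℝ, P = p * (1 - p) + p ^ 2 * P + p * (1 - p) * (1 - P)
        → P = 2 * p / (1 + 2 * p)) ∧
      2 * p / (1 + 2 * p) ≤ 2 / 3 ∧
      StrictMonoOn (fun t : ℝ => 2 * t / (1 + 2 * t)) (Set.Ico (0 : ℝ) 1) := by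
  have hne : (1 + 2 * p) ≠ 0 := by nlinarith
  refine ⟨by field_simp; ring, fun P hP => ?_, ?_, ?_⟩
  · have h : P * (1 + 2 * p) = 2 * p := by nlinarith [hP]
    field_simp
    linarith
  · rw [div_le_div_iff₀ (by nlinarith) (by norm_num)]
    nlinarith
  · intro x hx y hy hxy
    have hx0 := hx.1
    have hy0 := hy.1
    simp only
    rw [div_lt_div_iff₀ (by nlinarith) (by nlinarith)]
    nlinarith
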